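/- Suppose a < 1, b > 0, s > 0, and h(γ) ≠ 0 for every γ > 0. Then l′(γ) < 0 for all γ > 0, and consequently l is strictly decreasing on (0,∞). -/

import Mathlib

open Filter Set Topology

/-- The single-coordinate marginal log-likelihood term arising in the fast
Bayesian compressive-sensing algorithm with a Generalized Beta Mixture prior. -/
noncomputable def l (s q a b γ : ℝ) : ℝ :=
  (1/2) * Real.log (1 / (1 + γ * s)) + (1/2) * q^2 * γ / (1 + γ * s)
    + (a - 1) * Real.log γ - (a + b) * Real.log (1 + γ)

/-- The cubic `h`, the numerator of `l'` after clearing denominators: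
`2γ(1+γ)(1+sγ)² ⬝ l'(γ) = h(γ)` for `γ > 0`. -/
noncomputable def h (s q a b γ : ℝ) : ℝ :=
  (-(3 + 2*b) * s^2) * γ^3 + (q^2 + (2*a - 3) * s^2 - (5 + 4*b) * s) * γ^2
    + (q^2 + (4*a - 5) * s - 2 - 2*b) * γ + 2 * (a - 1)

lemma hasDerivAt_l (s q a b γ : ℝ) (hγ : 0 < γ) (hs : 0 < s) :
    HasDerivAt (l s q a b)
      (-s/(2*(1+γ*s)) + q^2/(2*(1+γ*s)^2) + (a-1)/γ - (a+b)/(1+γ)) γ := by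
  have hx : (0:ℝ) < 1 + γ*s := by positivity
  have hxne : (1:ℝ) + γ*s ≠ 0 := ne_of_gt hx
  have hyne : (1:ℝ) + γ ≠ 0 := by positivity
  have h1 : HasDerivAt (fun x : ℝ => 1 + x*s) s γ := by
    simpa using ((hasDerivAt_id γ).mul_const s).const_add 1
  have h2 : HasDerivAt (fun x : ℝ => 1/(1+x*s)) ((0*(1+γ*s) - 1*s)/(1+γ*s)^2) γ :=
    (hasDerivAt_const γ 1).div h1 hxne
  have h3 : HasDerivAt (fun x : ℝ => Real.log (1/(1+x*s)))
      (((0*(1+γ*s) - 1*s)/(1+γ*s)^2) / (1/(1+γ*s))) γ :=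
    h2.log (by positivity)
  have h4 : HasDerivAt (fun x : ℝ => (1/2) * q^2 * x) ((1/2)*q^2) γ := by
    simpa using (hasDerivAt_id γ).const_mul ((1/2) * q^2)
  have h5 : HasDerivAt (fun x : ℝ => (1/2) * q^2 * x / (1+x*s))
      (((1/2)*q^2*(1+γ*s) - (1/2)*q^2*γ*s)/(1+γ*s)^2) γ := h4.div h1 hxne
  have h6 : HasDerivAt (fun x : ℝ => (a-1) * Real.log x) ((a-1) * γ⁻¹) γ :=
    (Real.hasDerivAt_log (ne_of_gt hγ)).const_mul (a-1)
  have h7 : HasDerivAt (fun x : ℝ => 1 + x) 1 γ := by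
    simpa using (hasDerivAt_id γ).const_add 1
  have h8 : HasDerivAt (fun x : ℝ => (a+b) * Real.log (1+x)) ((a+b) * (1/(1+γ))) γ := by
    simpa using (h7.log hyne).const_mul (a+b)
  have hcomb := (((h3.const_mul (1/2)).add h5).add h6).sub h8
  have hfun : l s q a b = (fun x : ℝ => (1/2) * Real.log (1 / (1 + x * s))
      + (1/2) * q^2 * x / (1 + x * s) + (a - 1) * Real.log x
      - (a + b) * Real.log (1 + x)) := rfl
  rw [hfun]
  convert hcomb using 1
  · rfl
  · rfl
  · rfl
  field_simp
  ring

lemma h_neg (s q a b : ℝ) (ha : a < 1) (hroot : ∀ γ : ℝ, 0 < γ → h s q a b γ ≠ 0) :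
    ∀ γ : ℝ, 0 < γ → h s q a b γ < 0 := by
  intro γ hγ
  by_contra hcon
  push_neg at hcon
  have h0 : h s q a b 0 < 0 := by simp [h]; linarith
  have hcont : ContinuousOn (h s q a b) (Icc 0 γ) := by
    apply Continuous.continuousOn; unfold h; continuity
  have : (0:ℝ) ∈ Icc (h s q a b 0) (h s q a b γ) := ⟨le_of_lt h0, hcon⟩
  obtain ⟨c, hc, hc0⟩ := intermediate_value_Icc (le_of_lt hγ) hcont this
  have hcpos : 0 < c := by
    rcases lt_or_eq_of_le hc.1 with h' | h'
    · exact h'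
    · exfalso; rw [← h'] at hc0; linarith
  exact hroot c hcpos hc0

theorem l_strictAnti_of_no_root (s q a b : ℝ) (ha : a < 1) (hb : 0 < b) (hs : 0 < s)
    (hroot : ∀ γ : ℝ, 0 < γ → h s q a b γ ≠ 0) :
    (∀ γ : ℝ, 0 < γ → deriv (l s q a b) γ < 0) ∧
      StrictAntiOn (l s q a b) (Ioi (0:ℝ)) := by
  have key : ∀ γ : ℝ, 0 < γ → deriv (l s q a b) γ < 0 := by
    intro γ hγ
    have hd := hasDerivAt_l s q a b γ hγ hs
    rw [hd.deriv]
    have hx : (0:ℝ) < 1 + γ*s := by positivity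
    have hy : (0:ℝ) < 1 + γ := by positivity
    have hD : (-s/(2*(1+γ*s)) + q^2/(2*(1+γ*s)^2) + (a-1)/γ - (a+b)/(1+γ))
        = h s q a b γ / (2*γ*(1+γ)*(1+γ*s)^2) := by
      rw [eq_div_iff (by positivity)]
      simp only [h]
      field_simp
      ring
    rw [hD]
    exact div_neg_of_neg_of_pos (h_neg s q a b ha hroot γ hγ) (by positivity)
  refine ⟨key, ?_⟩
  have hcont : ContinuousOn (l s q a b) (Ioi 0) := fun x hx =>
    ((hasDerivAt_l s q a b x hx hs).continuousAt).continuousWithinAt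
  have := strictAntiOn_of_deriv_neg (convex_Ioi (0:ℝ)) hcont ?_
  · exact this
  · intro x hx
    rw [interior_Ioi] at hx
    exact key x hx
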